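/- Let F be a unit vector in Im 𝕆 and let α, β ∈ T_F^{1,0} = {v ∈ F^⊥ ⊗ ℂ : F × v = iv}. Then α × β lies in T_F^{0,1}, i.e., F × (α × β) = −i (α × β). -/
import Mathlib


open scoped ComplexConjugate

/-- The standard complex-bilinear symmetric form on `ℂⁿ`. -/
noncomputable def Bform {n : ℕ} (u v : Fin n → ℂ) : ℂ := ∑ i, u i * v i

/-- Componentwise complex conjugation on `ℂⁿ`. -/
noncomputable def conjn {n : ℕ} (v : Fin n → ℂ) : Fin n → ℂ := fun i => conj (v i)

lemma Bform_comm {n : ℕ} (u v : Fin n → ℂ) : Bform u v = Bform v u := by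
  unfold Bform; simp [mul_comm]

lemma Bform_smul_left {n : ℕ} (c : ℂ) (u v : Fin n → ℂ) :
    Bform (c • u) v = c * Bform u v := by
  unfold Bform
  rw [Finset.mul_sum]
  simp [mul_assoc]

lemma Bform_neg_left {n : ℕ} (u v : Fin n → ℂ) :
    Bform (-u) v = - Bform u v := by
  unfold Bform
  rw [← Finset.sum_neg_distrib]
  simp

/-- A real vector that is null for `Bform` is zero. -/
lemma real_null_eq_zero {n : ℕ} (r : Fin n → ℂ) (hr : conjn r = r)
    (h : Bform r r = 0) : r = 0 := by
  have him : ∀ i, (r i).im = 0 := by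
    intro i
    have := congrFun hr i
    simpa [conjn, Complex.conj_eq_iff_im] using this
  have hre : ∑ i, ((r i).re) * ((r i).re) = 0 := by
    have := congrArg Complex.re h
    rw [Bform] at this
    rw [Complex.re_sum] at this
    simpa [Complex.mul_re, him] using this
  have hzero : ∀ i ∈ Finset.univ, ((r i).re) * ((r i).re) = 0 :=
    (Finset.sum_eq_zero_iff_of_nonneg
      (fun i _ => mul_self_nonneg ((r i).re))).mp hre
  funext i
  have := hzero i (Finset.mem_univ i)
  have h1 : (r i).re = 0 := by nlinarith [this]
  exact Complex.ext h1 (him i)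

/-- For F a real unit vector and α, β ∈ T_F^{1,0}, the product
α × β lies in T_F^{0,1}: F × (α × β) = −i (α × β). -/
theorem cross_of_onezero_in_zeroone
    (cross : (Fin 7 → ℂ) →ₗ[ℂ] (Fin 7 → ℂ) →ₗ[ℂ] (Fin 7 → ℂ))
    (h1 : ∀ u v w, Bform u (cross v w) = Bform (cross u v) w)
    (h2 : ∀ u v w : Fin 7 → ℂ, cross u (cross v w) + cross (cross u v) w
        = (2 * Bform u w) • v - Bform u v • w - Bform v w • u)
    (hconj : ∀ u v, conjn (cross u v) = cross (conjn u) (conjn v))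
    (F : Fin 7 → ℂ) (hFreal : conjn F = F) (hFunit : Bform F F = 1)
    (α β : Fin 7 → ℂ)
    (hαperp : Bform F α = 0) (hα : cross F α = Complex.I • α)
    (hβperp : Bform F β = 0) (hβ : cross F β = Complex.I • β) :
    cross F (cross α β) = (-Complex.I) • cross α β := by
  -- Step 1: cross u u = 0 for real u.
  have hreal_sq : ∀ u : Fin 7 → ℂ, conjn u = u → cross u u = 0 := by
    intro u hu
    set a := cross u u with ha
    -- from h2 (u,u,u): u×a + a×u = 0
    have h3 : cross u a + cross a u = 0 := by
      have := h2 u u u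
      rw [← ha] at this
      rw [this]
      module
    -- (a,a) = Bform u (cross u a) and also = -Bform u (cross u a)
    have e1 : Bform a a = Bform u (cross u a) := (h1 u u a).symm
    have e2 : Bform u (cross a u) = Bform a a := by
      rw [h1 u a u, Bform_comm]
      exact e1.symm
    have h4 : cross u a = - cross a u := by
      have := h3; linear_combination (norm := module) this
    have e3 : Bform a a = - Bform a a := by
      calc Bform a a = Bform u (cross u a) := e1
        _ = Bform u (- cross a u) := by rw [h4]
        _ = - Bform u (cross a u) := by rw [Bform_comm, Bform_neg_left, Bform_comm]
        _ = - Bform a a := by rw [e2]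
    have hBaa : Bform a a = 0 := by linear_combination e3 / 2
    have hareal : conjn a = a := by
      rw [ha, hconj, hu]
    exact real_null_eq_zero a hareal hBaa
  -- Step 2: cross u u = 0 for all u.
  have hsq : ∀ u : Fin 7 → ℂ, cross u u = 0 := by
    intro u
    set p : Fin 7 → ℂ := fun i => ((u i).re : ℂ) with hp
    set q : Fin 7 → ℂ := fun i => ((u i).im : ℂ) with hq
    have hpreal : conjn p = p := by funext i; simp [conjn, hp]
    have hqreal : conjn q = q := by funext i; simp [conjn, hq]
    have hpqreal : conjn (p + q) = p + q := by
      funext i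
      simp [conjn, hp, hq]
    have hu : u = p + Complex.I • q := by
      funext i
      simp [hp, hq, Pi.smul_apply, smul_eq_mul]
      rw [mul_comm]
      exact (Complex.re_add_im (u i)).symm
    have hpp := hreal_sq p hpreal
    have hqq := hreal_sq q hqreal
    have hpq : cross p q + cross q p = 0 := by
      have := hreal_sq (p + q) hpqreal
      simp only [map_add, LinearMap.add_apply, hpp, hqq] at this
      rw [zero_add] at this
      rw [← this]
      abel
    rw [hu]
    have hqp : cross q p = - cross p q := by linear_combination (norm := module) hpq
    simp only [map_add, map_smul, LinearMap.add_apply, LinearMap.smul_apply, hpp, hqq,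
      smul_zero, smul_add, hqp]
    module
  -- Step 3: antisymmetry.
  have hanti : ∀ u v : Fin 7 → ℂ, cross u v = - cross v u := by
    intro u v
    have := hsq (u + v)
    simp only [map_add, LinearMap.add_apply, hsq u, hsq v] at this
    linear_combination (norm := module) this
  -- Step 4: Bform α β = 0.
  have hαβ : Bform α β = 0 := by
    have e1 : Bform (cross F α) β = Complex.I * Bform α β := by
      rw [hα, Bform_smul_left]
    have e2 : Bform (cross F α) β = - (Complex.I * Bform α β) := by
      rw [hanti F α, Bform_neg_left, ← h1, hβ, Bform_comm, Bform_smul_left, Bform_comm]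
    have : Complex.I * Bform α β = 0 := by
      have := e1.symm.trans e2
      linear_combination this / 2
    rcases mul_eq_zero.mp this with h | h
    · exact absurd h Complex.I_ne_zero
    · exact h
  -- Step 5: conclude from h2 (F,α,β).
  have key := h2 F α β
  rw [hαperp, hβperp, hαβ, hα] at key
  simp only [map_smul, LinearMap.smul_apply, mul_zero, zero_smul, smul_zero, sub_zero] at key
  linear_combination (norm := module) key
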